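/- For all complex ξ₁, ξ₂, p, q, η with Re(ξ₁) > 0, Re(ξ₂) > 0, Re(p) > 0, Re(q) > 0 and Re(η) > -1, the extended beta function satisfies the recurrence B_η^{p,q}(ξ₁,ξ₂) = B_η^{p,q}(ξ₁+1,ξ₂) + B_η^{p,q}(ξ₁,ξ₂+1). -/

import Mathlib

open MeasureTheory Complex

/-- The Bessel–Struve kernel function, defined by its power series. -/
noncomputable def besselStruve (η t : ℂ) : ℂ :=
  (Complex.Gamma (η + 1) / (Real.sqrt Real.pi : ℂ)) *
    ∑' m : ℕ, t ^ m * Complex.Gamma (((m : ℂ) + 1) / 2) /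
      ((m.factorial : ℂ) * Complex.Gamma ((m : ℂ) / 2 + η + 1))

/-- The extended beta function `B_η^{p,q}(ξ₁, ξ₂)`. -/
noncomputable def extBeta (η p q ξ₁ ξ₂ : ℂ) : ℂ :=
  ∫ y in (0:ℝ)..1, (y : ℂ) ^ (ξ₁ - 1) * ((1 : ℂ) - (y : ℂ)) ^ (ξ₂ - 1) *
    besselStruve η (-p / (y : ℂ)) * besselStruve η (-q / (1 - (y : ℂ)))

/-- The Pochhammer symbol `(a)_l = Γ(a + l)/Γ(a)`. -/
noncomputable def poch (a : ℂ) (l : ℕ) : ℂ := Complex.Gamma (a + l) / Complex.Gamma a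

/-- The extended Gauss hypergeometric function `F_η^{p,q}(ξ₁, ξ₂; ξ₃; x)`. -/
noncomputable def extF (η p q ξ₁ ξ₂ ξ₃ x : ℂ) : ℂ :=
  ∑' l : ℕ, poch ξ₁ l * extBeta η p q (ξ₂ + l) (ξ₃ - ξ₂) * x ^ l /
    (Complex.betaIntegral ξ₂ (ξ₃ - ξ₂) * (l.factorial : ℂ))

/-- The extended confluent hypergeometric function `Φ_η^{p,q}(ξ₂; ξ₃; x)`. -/
noncomputable def extPhi (η p q ξ₂ ξ₃ x : ℂ) : ℂ :=
  ∑' l : ℕ, extBeta η p q (ξ₂ + l) (ξ₃ - ξ₂) * x ^ l /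
    (Complex.betaIntegral ξ₂ (ξ₃ - ξ₂) * (l.factorial : ℂ))

open Set

noncomputable section BesselStruveAux

/-- Auxiliary integral `∫_0^1 s^j (1-s²)^{η+1/2} e^{ts} ds`. -/
def bsE (η : ℂ) (j : ℕ) (t : ℂ) : ℂ :=
  ∫ s in Ioo (0:ℝ) 1, (s:ℂ)^j * ((1:ℂ)-(s:ℂ)^2)^(η+1/2) * Complex.exp (t*(s:ℂ))

/-- Auxiliary moment `∫_0^1 s^k (1-s²)^{η+1/2} ds`. -/
def bsJ (η : ℂ) (k : ℕ) : ℂ :=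
  ∫ s in Ioo (0:ℝ) 1, (s:ℂ)^k * ((1:ℂ)-(s:ℂ)^2)^(η+1/2)

lemma sq_image_Ioo : (fun x:ℝ => x^2) '' (Ioo 0 1) = Ioo 0 1 := by
  ext u
  constructor
  · rintro ⟨x, ⟨h0, h1⟩, rfl⟩
    exact ⟨by positivity, by simpa using (by nlinarith : x^2 < 1)⟩
  · rintro ⟨h0, h1⟩
    refine ⟨Real.sqrt u, ⟨Real.sqrt_pos.2 h0, ?_⟩, Real.sq_sqrt h0.le⟩
    rw [show (1:ℝ) = Real.sqrt 1 by simp]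
    exact Real.sqrt_lt_sqrt h0.le h1

lemma bsJ_eq {η : ℂ} (hη : -1 < η.re) (k : ℕ) :
    bsJ η k = Complex.betaIntegral (((k:ℂ)+1)/2) (η+3/2) / 2 := by
  have hderiv : ∀ x ∈ Ioo (0:ℝ) 1,
      HasDerivWithinAt (fun x:ℝ => x^2) (2*x) (Ioo 0 1) x := by
    intro x _
    simpa using (hasDerivAt_pow 2 x).hasDerivWithinAt
  have hinj : InjOn (fun x:ℝ => x^2) (Ioo (0:ℝ) 1) := by
    intro a ha b hb h
    simp only at h
    have : |a| = |b| := by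
      rw [← Real.sqrt_sq_eq_abs, ← Real.sqrt_sq_eq_abs, h]
    rwa [abs_of_pos ha.1, abs_of_pos hb.1] at this
  have key := integral_image_eq_integral_abs_deriv_smul measurableSet_Ioo hderiv hinj
    (fun u : ℝ => (u:ℂ)^(((k:ℂ)-1)/2) * ((1:ℂ)-(u:ℂ))^(η+1/2))
  rw [sq_image_Ioo] at key
  have hbeta : Complex.betaIntegral (((k:ℂ)+1)/2) (η+3/2)
      = ∫ u in Ioo (0:ℝ) 1, (u:ℂ)^(((k:ℂ)-1)/2) * ((1:ℂ)-(u:ℂ))^(η+1/2) := by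
    rw [Complex.betaIntegral, intervalIntegral.integral_of_le zero_le_one,
      integral_Ioc_eq_integral_Ioo]
    congr 1
    ext u
    have e1 : ((k:ℂ)+1)/2 - 1 = ((k:ℂ)-1)/2 := by ring
    have e2 : η + 3/2 - 1 = η + 1/2 := by ring
    rw [e1, e2]
  have hpt : ∀ x ∈ Ioo (0:ℝ) 1,
      |2*x| • ((((x^2 : ℝ)):ℂ)^(((k:ℂ)-1)/2) * ((1:ℂ)-(((x^2:ℝ)):ℂ))^(η+1/2))
      = 2 * ((x:ℂ)^k * ((1:ℂ)-(x:ℂ)^2)^(η+1/2)) := by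
    intro x hx
    have hx0 : (0:ℝ) < x := hx.1
    have hxC : (x:ℂ) ≠ 0 := by
      simp [Complex.ofReal_ne_zero, hx0.ne']
    have habs : |2*x| = 2*x := abs_of_pos (by linarith)
    have hcast : (((x^2 : ℝ)):ℂ) = (x:ℂ)^2 := by push_cast; ring
    have hlog : (Complex.log (x:ℂ) * 2).im = 0 := by
      simp [Complex.log_im, Complex.arg_ofReal_of_nonneg hx0.le]
    have hcpow : ((x:ℂ)^2)^(((k:ℂ)-1)/2) = (x:ℂ)^((k:ℂ)-1) := by
      rw [← Complex.cpow_natCast (x:ℂ) 2, ← Complex.cpow_mul]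
      · congr 1
        push_cast
        ring
      · rw [show ((2:ℕ):ℂ) = (2:ℂ) by norm_num, hlog]
        exact neg_lt_zero.2 Real.pi_pos
      · rw [show ((2:ℕ):ℂ) = (2:ℂ) by norm_num, hlog]
        exact Real.pi_pos.le
    have hxk : (x:ℂ) * (x:ℂ)^((k:ℂ)-1) = (x:ℂ)^k := by
      rw [Complex.cpow_sub _ _ hxC, Complex.cpow_natCast, Complex.cpow_one]
      field_simp
    rw [habs, hcast, hcpow, Complex.real_smul]
    push_cast
    rw [← hxk]
    ring
  rw [hbeta, key, MeasureTheory.setIntegral_congr_fun measurableSet_Ioo hpt,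
    MeasureTheory.integral_const_mul]
  rw [bsJ]
  ring


/-- the dominating function -/
def bsg (η : ℂ) (s : ℝ) : ℝ := (1-s) ^ (η.re + 1/2)

def bsK (η : ℂ) : ℝ := 2 ^ (η.re + 1/2) + 1

lemma bsK_pos (η : ℂ) : 0 < bsK η := by
  have : (0:ℝ) < 2 ^ (η.re + 1/2) := Real.rpow_pos_of_pos (by norm_num) _
  unfold bsK; linarith

lemma bsg_nonneg (η : ℂ) {s : ℝ} (hs : s ∈ Ioo (0:ℝ) 1) : 0 ≤ bsg η s :=
  Real.rpow_nonneg (by linarith [hs.2]) _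

lemma bsg_int {η : ℂ} (hη : -1 < η.re) : IntegrableOn (bsg η) (Ioo (0:ℝ) 1) volume := by
  have h := (Complex.betaIntegral_convergent (u := 1) (v := η + 3/2) (by norm_num)
    (by simp; linarith)).norm
  have h2 : IntegrableOn (fun x:ℝ => ‖(x:ℂ)^((1:ℂ)-1) * ((1:ℂ)-(x:ℂ))^(η+3/2-1)‖)
      (Ioo (0:ℝ) 1) volume :=
    ((intervalIntegrable_iff_integrableOn_Ioc_of_le zero_le_one).1 h).mono_set
      Ioo_subset_Ioc_self
  refine h2.congr_fun ?_ measurableSet_Ioo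
  intro s hs
  have h1s : (0:ℝ) < 1 - s := by linarith [hs.2]
  have : ((1:ℂ)-(s:ℂ)) = (((1-s : ℝ)):ℂ) := by push_cast; ring
  simp only [sub_self, Complex.cpow_zero, one_mul, this,
    Complex.norm_cpow_eq_rpow_re_of_pos h1s]
  unfold bsg
  congr 1
  simp [Complex.add_re, Complex.sub_re]
  ring

lemma bs_cpow_norm_le {η : ℂ} {s : ℝ} (hs : s ∈ Ioo (0:ℝ) 1) :
    ‖((1:ℂ)-(s:ℂ)^2)^(η+1/2)‖ ≤ bsK η * bsg η s := by
  obtain ⟨h0, h1⟩ := hs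
  have h1s : (0:ℝ) < 1 - s := by linarith
  have h1s2 : (0:ℝ) < 1 - s^2 := by nlinarith
  have hb : ((1:ℂ)-(s:ℂ)^2) = (((1-s^2 : ℝ)):ℂ) := by push_cast; ring
  rw [hb]
  have hre : (η+1/2).re = η.re + 1/2 := by simp
  rw [Complex.norm_cpow_eq_rpow_re_of_pos h1s2, hre]
  have hfac : (1 - s^2 : ℝ) = (1-s) * (1+s) := by ring
  rw [hfac, Real.mul_rpow h1s.le (by linarith)]
  have hle : (1+s) ^ (η.re + 1/2) ≤ bsK η := by
    rcases le_or_gt 0 (η.re + 1/2) with hB | hB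
    · have : (1+s) ^ (η.re + 1/2) ≤ 2 ^ (η.re + 1/2) :=
        Real.rpow_le_rpow (by linarith) (by linarith) hB
      unfold bsK; linarith
    · have : (1+s) ^ (η.re + 1/2) ≤ 1 :=
        Real.rpow_le_one_of_one_le_of_nonpos (by linarith) hB.le
      have h2 : (0:ℝ) < 2 ^ (η.re + 1/2) := Real.rpow_pos_of_pos (by norm_num) _
      unfold bsK; linarith
  calc (1-s) ^ (η.re+1/2) * (1+s) ^ (η.re+1/2)
      ≤ (1-s) ^ (η.re+1/2) * bsK η := by
        apply mul_le_mul_of_nonneg_left hle (Real.rpow_nonneg h1s.le _)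
    _ = bsK η * bsg η s := by unfold bsg; ring

lemma bs_cpow_continuousOn (η : ℂ) :
    ContinuousOn (fun s:ℝ => ((1:ℂ)-(s:ℂ)^2)^(η+1/2)) (Ioo (0:ℝ) 1) := by
  intro s hs
  have h1s2 : (0:ℝ) < 1 - s^2 := by nlinarith [hs.1, hs.2]
  apply ContinuousAt.continuousWithinAt
  apply ContinuousAt.cpow
  · fun_prop
  · exact continuousAt_const
  · left
    have : ((1:ℂ)-(s:ℂ)^2) = (((1-s^2 : ℝ)):ℂ) := by push_cast; ring
    rw [this, Complex.ofReal_re]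
    exact h1s2


lemma bsF_integrable {η : ℂ} (hη : -1 < η.re) (k : ℕ) (c : ℂ) :
    Integrable (fun s : ℝ => c * ((s:ℂ)^k * ((1:ℂ)-(s:ℂ)^2)^(η+1/2)))
      (volume.restrict (Ioo (0:ℝ) 1)) := by
  refine Integrable.mono' (((bsg_int hη).const_mul (‖c‖ * bsK η))) ?_ ?_
  · refine (ContinuousOn.aestronglyMeasurable ?_ measurableSet_Ioo)
    exact (continuousOn_const.mul
      ((continuous_ofReal.continuousOn.pow k).mul (bs_cpow_continuousOn η)))
  · rw [ae_restrict_iff' measurableSet_Ioo]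
    refine ae_of_all _ fun s hs => ?_
    have h1 : ‖(s:ℂ)^k‖ ≤ 1 := by
      rw [norm_pow, Complex.norm_real, Real.norm_eq_abs, abs_of_pos hs.1]
      exact pow_le_one₀ hs.1.le hs.2.le
    calc ‖c * ((s:ℂ)^k * ((1:ℂ)-(s:ℂ)^2)^(η+1/2))‖
        = ‖c‖ * (‖(s:ℂ)^k‖ * ‖((1:ℂ)-(s:ℂ)^2)^(η+1/2)‖) := by
          simp [norm_mul]
      _ ≤ ‖c‖ * (1 * (bsK η * bsg η s)) := by
          apply mul_le_mul_of_nonneg_left _ (norm_nonneg c)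
          exact mul_le_mul h1 (bs_cpow_norm_le hs) (norm_nonneg _)
            (by linarith [norm_nonneg ((s:ℂ)^k)])
      _ = ‖c‖ * bsK η * bsg η s := by ring

lemma bsE_hasSum {η : ℂ} (hη : -1 < η.re) (j : ℕ) (t : ℂ) :
    HasSum (fun m : ℕ => t^m / (m.factorial : ℂ) * bsJ η (m+j)) (bsE η j t) := by
  set F : ℕ → ℝ → ℂ := fun m s =>
    (t^m / (m.factorial : ℂ)) * ((s:ℂ)^(m+j) * ((1:ℂ)-(s:ℂ)^2)^(η+1/2)) with hF
  have hFint : ∀ m, Integrable (F m) (volume.restrict (Ioo (0:ℝ) 1)) :=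
    fun m => bsF_integrable hη (m+j) _
  have hnormle : ∀ m, (∫ s in Ioo (0:ℝ) 1, ‖F m s‖)
      ≤ ‖t‖^m / (m.factorial : ℝ) * (bsK η * (∫ s in Ioo (0:ℝ) 1, bsg η s)) := by
    intro m
    have hb : Integrable (fun s => ‖t‖^m / (m.factorial:ℝ) * (bsK η * bsg η s))
        (volume.restrict (Ioo (0:ℝ) 1)) := by
      simpa [mul_assoc] using
        ((bsg_int hη).const_mul (‖t‖^m / (m.factorial:ℝ) * bsK η))
    rw [show ‖t‖^m / (m.factorial:ℝ) * (bsK η * ∫ s in Ioo (0:ℝ) 1, bsg η s)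
        = ∫ s in Ioo (0:ℝ) 1, ‖t‖^m / (m.factorial:ℝ) * (bsK η * bsg η s) from by
      rw [MeasureTheory.integral_const_mul, MeasureTheory.integral_const_mul]]
    refine integral_mono_ae (hFint m).norm hb ?_
    filter_upwards [ae_restrict_mem measurableSet_Ioo] with s hs
    have h1 : ‖(s:ℂ)^(m+j)‖ ≤ 1 := by
      rw [norm_pow, Complex.norm_real, Real.norm_eq_abs, abs_of_pos hs.1]
      exact pow_le_one₀ hs.1.le hs.2.le
    have h2 : ‖t^m / (m.factorial : ℂ)‖ = ‖t‖^m / (m.factorial : ℝ) := by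
      rw [norm_div, norm_pow]
      congr 1
      simp
    calc ‖F m s‖ = ‖t^m / (m.factorial:ℂ)‖ * (‖(s:ℂ)^(m+j)‖ * ‖((1:ℂ)-(s:ℂ)^2)^(η+1/2)‖) := by
          simp [hF, norm_mul]
      _ ≤ (‖t‖^m / (m.factorial : ℝ)) * (1 * (bsK η * bsg η s)) := by
          rw [h2]
          apply mul_le_mul_of_nonneg_left _ (by positivity)
          exact mul_le_mul h1 (bs_cpow_norm_le hs) (norm_nonneg _)
            (by linarith [norm_nonneg ((s:ℂ)^(m+j))])
      _ = ‖t‖^m / (m.factorial : ℝ) * (bsK η * bsg η s) := by ring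
  have hsummable : Summable (fun m => ∫ s in Ioo (0:ℝ) 1, ‖F m s‖) := by
    refine Summable.of_nonneg_of_le (fun m => integral_nonneg fun s => norm_nonneg _)
      hnormle ?_
    exact (Real.summable_pow_div_factorial ‖t‖).mul_right _
  have key := MeasureTheory.hasSum_integral_of_summable_integral_norm hFint hsummable
  have h1 : ∀ m, (∫ s in Ioo (0:ℝ) 1, F m s) = t^m / (m.factorial : ℂ) * bsJ η (m+j) := by
    intro m
    rw [hF, MeasureTheory.integral_const_mul, bsJ]
  have h2 : ∀ s : ℝ, (∑' m, F m s)
      = (s:ℂ)^j * ((1:ℂ)-(s:ℂ)^2)^(η+1/2) * Complex.exp (t*(s:ℂ)) := by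
    intro s
    have hterm : ∀ m : ℕ, F m s
        = ((s:ℂ)^j * ((1:ℂ)-(s:ℂ)^2)^(η+1/2)) * ((t*(s:ℂ))^m / (m.factorial : ℂ)) := by
      intro m
      rw [hF]
      simp only [pow_add, mul_pow]
      ring
    rw [tsum_congr hterm, tsum_mul_left]
    congr 1
    rw [Complex.exp_eq_exp_ℂ, NormedSpace.exp_eq_tsum_div]
  simp only [funext h1] at key
  have h3 : (∫ s in Ioo (0:ℝ) 1, ∑' m, F m s) = bsE η j t := by
    rw [bsE]
    exact integral_congr_ae (Filter.Eventually.of_forall h2)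
  rwa [h3] at key

lemma re_add_nat_div2 (η : ℂ) (m : ℕ) : ((m:ℂ)/2 + η + 1).re = (m:ℝ)/2 + η.re + 1 := by
  have h : (m:ℂ)/2 = (((m:ℝ)/2 : ℝ):ℂ) := by push_cast; ring
  rw [h]
  simp

lemma gamma_shift_ne {η : ℂ} (hη : -1 < η.re) (m : ℕ) :
    Complex.Gamma ((m:ℂ)/2 + η + 1) ≠ 0 := by
  apply Complex.Gamma_ne_zero_of_re_pos
  rw [re_add_nat_div2]
  have : (0:ℝ) ≤ (m:ℝ)/2 := by positivity
  linarith

lemma bsJ_gamma {η : ℂ} (hη : -1 < η.re) (k : ℕ) :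
    bsJ η k = Complex.Gamma (((k:ℂ)+1)/2) * Complex.Gamma (η+3/2) /
      (2 * (((k:ℂ)/2 + η + 1) * Complex.Gamma ((k:ℂ)/2 + η + 1))) := by
  have h1 : (0:ℝ) < (((k:ℂ)+1)/2).re := by
    have h : ((k:ℂ)+1)/2 = ((((k:ℝ)+1)/2 : ℝ):ℂ) := by push_cast; ring
    rw [h, Complex.ofReal_re]
    positivity
  have h2 : (0:ℝ) < (η+3/2).re := by
    simp only [Complex.add_re, Complex.one_re]
    norm_num
    linarith
  have hbeta := Complex.Gamma_mul_Gamma_eq_betaIntegral h1 h2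
  have hargs : ((k:ℂ)+1)/2 + (η+3/2) = ((k:ℂ)/2 + η + 1) + 1 := by ring
  rw [hargs] at hbeta
  have hne : ((k:ℂ)/2 + η + 1) ≠ 0 := by
    intro h
    have := congrArg Complex.re h
    rw [re_add_nat_div2] at this
    simp only [Complex.zero_re] at this
    have h0 : (0:ℝ) ≤ (k:ℝ)/2 := by positivity
    linarith
  rw [Complex.Gamma_add_one _ hne] at hbeta
  have h3 : ((k:ℂ)/2 + η + 1) * Complex.Gamma ((k:ℂ)/2 + η + 1) ≠ 0 :=
    mul_ne_zero hne (gamma_shift_ne hη k)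
  rw [bsJ_eq hη k, eq_div_iff (mul_ne_zero two_ne_zero h3)]
  linear_combination -hbeta

lemma bs_aux_alg (Ga G1 G2 G3 X sq fac tm c1 c2 : ℂ) (hG2 : G2 ≠ 0) (hG3 : G3 ≠ 0)
    (hX : X ≠ 0) (hsq : sq ≠ 0) (hfac : fac ≠ 0) (hco : c1 + c2 = 2*X) :
    Ga / (sq * G2) * c1 * (tm / fac * (G1 * G2 / (2 * (X * G3)))) +
      Ga / (sq * G2) * c2 * (tm / fac) * (G1 * G2 / (2 * (X * G3)))
    = Ga / sq * (tm * G1 / (fac * G3)) := by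
  have hd1 : sq * G2 * fac * (2 * (X * G3)) ≠ 0 := by
    apply mul_ne_zero (mul_ne_zero (mul_ne_zero hsq hG2) hfac)
    apply mul_ne_zero two_ne_zero (mul_ne_zero hX hG3)
  have hd2 : sq * (fac * G3) ≠ 0 := mul_ne_zero hsq (mul_ne_zero hfac hG3)
  have step1 : Ga / (sq * G2) * c1 * (tm / fac * (G1 * G2 / (2 * (X * G3)))) +
      Ga / (sq * G2) * c2 * (tm / fac) * (G1 * G2 / (2 * (X * G3)))
      = Ga * tm * G1 * G2 * (c1 + c2) / (sq * G2 * fac * (2 * (X * G3))) := by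
    ring
  have step2 : Ga / sq * (tm * G1 / (fac * G3)) = Ga * tm * G1 / (sq * (fac * G3)) := by
    ring
  rw [step1, step2, hco, div_eq_div_iff hd1 hd2]
  ring

lemma besselStruve_rep {η : ℂ} (hη : -1 < η.re) (t : ℂ) :
    besselStruve η t = Complex.Gamma (η+1) /
        ((Real.sqrt Real.pi : ℂ) * Complex.Gamma (η+3/2)) *
      (2*(η+1) * bsE η 0 t + t * bsE η 1 t) := by
  set β : ℂ := Complex.Gamma (η+1) / ((Real.sqrt Real.pi : ℂ) * Complex.Gamma (η+3/2))
    with hβ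
  have h0 : HasSum (fun m : ℕ => t^m / (m.factorial : ℂ) * bsJ η m) (bsE η 0 t) := by
    simpa using bsE_hasSum hη 0 t
  have h1 : HasSum (fun m : ℕ => t^m / (m.factorial : ℂ) * bsJ η (m+1)) (bsE η 1 t) :=
    bsE_hasSum hη 1 t
  have hA := h0.mul_left (β * (2*(η+1)))
  have hB := h1.mul_left (β * t)
  set g : ℕ → ℂ := fun n => β * (n:ℂ) * (t^n / (n.factorial : ℂ)) * bsJ η n with hg
  have hgs : (fun m : ℕ => g (m+1))
      = fun m : ℕ => β * t * (t^m / (m.factorial : ℂ) * bsJ η (m+1)) := by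
    funext m
    rw [hg]
    simp only [Nat.cast_add, Nat.cast_one, Nat.factorial_succ, Nat.cast_mul]
    have hm : ((m:ℂ)+1) ≠ 0 := by
      exact_mod_cast Nat.cast_add_one_ne_zero (R := ℂ) m
    have hf : ((m.factorial : ℂ)) ≠ 0 := by
      exact_mod_cast Nat.cast_ne_zero.2 m.factorial_ne_zero
    field_simp
    ring
  have hB2 : HasSum (fun n : ℕ => g (n+1)) (β * t * bsE η 1 t) := by
    rw [hgs]; exact hB
  have hB' : HasSum g (β * t * bsE η 1 t) := by
    have h := (hasSum_nat_add_iff (f := g) 1).1 hB2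
    simpa [hg] using h
  have hsum := hA.add hB'
  have hterm : (fun m : ℕ => β * (2*(η+1)) * (t^m / (m.factorial : ℂ) * bsJ η m) + g m)
      = fun m : ℕ => (Complex.Gamma (η+1) / (Real.sqrt Real.pi : ℂ)) *
        (t ^ m * Complex.Gamma (((m : ℂ) + 1) / 2) /
          ((m.factorial : ℂ) * Complex.Gamma ((m : ℂ) / 2 + η + 1))) := by
    funext m
    simp only [hg]
    rw [bsJ_gamma hη m, hβ]
    have hG1 : Complex.Gamma (((m:ℂ)+1)/2) ≠ 0 := by
      apply Complex.Gamma_ne_zero_of_re_pos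
      have h : ((m:ℂ)+1)/2 = ((((m:ℝ)+1)/2 : ℝ):ℂ) := by push_cast; ring
      rw [h, Complex.ofReal_re]; positivity
    have hG2 : Complex.Gamma (η+3/2) ≠ 0 := by
      apply Complex.Gamma_ne_zero_of_re_pos
      simp only [Complex.add_re, Complex.one_re]
      norm_num; linarith
    have hG3 : Complex.Gamma ((m:ℂ)/2 + η + 1) ≠ 0 := gamma_shift_ne hη m
    have hne : ((m:ℂ)/2 + η + 1) ≠ 0 := by
      intro h
      have := congrArg Complex.re h
      rw [re_add_nat_div2] at this
      simp only [Complex.zero_re] at this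
      have h0 : (0:ℝ) ≤ (m:ℝ)/2 := by positivity
      linarith
    have hf : ((m.factorial : ℂ)) ≠ 0 := by
      exact_mod_cast Nat.cast_ne_zero.2 m.factorial_ne_zero
    have hpi : ((Real.sqrt Real.pi : ℝ):ℂ) ≠ 0 := by
      rw [Complex.ofReal_ne_zero]
      positivity
    generalize hGa : Complex.Gamma (η+1) = Ga
    generalize hg1 : Complex.Gamma (((m:ℂ)+1)/2) = G1 at hG1
    generalize hg2 : Complex.Gamma (η+3/2) = G2 at hG2
    generalize hg3 : Complex.Gamma ((m:ℂ)/2+η+1) = G3 at hG3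
    exact bs_aux_alg Ga G1 G2 G3 _ _ _ _ _ _ hG2 hG3 hne hpi hf
      (by push_cast; ring)
  rw [hterm] at hsum
  rw [besselStruve, ← tsum_mul_left, hsum.tsum_eq, hβ]
  ring


lemma bsE_measurable (η : ℂ) (j : ℕ) : Measurable (fun t : ℂ => bsE η j t) := by
  have hrw : ∀ t : ℂ, bsE η j t = ∫ s in Ioo (0:ℝ) 1,
      (s:ℂ)^j * Complex.exp ((Real.log (1-s^2) : ℂ) * (η+1/2)) * Complex.exp (t*(s:ℂ)) := by
    intro t
    refine setIntegral_congr_fun measurableSet_Ioo fun s hs => ?_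
    have h1 : (0:ℝ) < 1 - s^2 := by nlinarith [hs.1, hs.2]
    have hb : ((1:ℂ)-(s:ℂ)^2) = (((1-s^2 : ℝ)):ℂ) := by push_cast; ring
    rw [hb, Complex.cpow_def_of_ne_zero (by
      rw [Complex.ofReal_ne_zero]; exact h1.ne'), ← Complex.ofReal_log h1.le]
  have hF : StronglyMeasurable (fun pa : ℂ × ℝ =>
      ((pa.2:ℂ))^j * Complex.exp ((Real.log (1-pa.2^2) : ℂ) * (η+1/2))
        * Complex.exp (pa.1*(pa.2:ℂ))) := by
    apply Measurable.stronglyMeasurable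
    apply Measurable.mul
    · apply Measurable.mul
      · exact ((Complex.measurable_ofReal.comp measurable_snd).pow_const j)
      · apply Complex.measurable_exp.comp
        apply Measurable.mul_const
        exact Complex.measurable_ofReal.comp
          (Real.measurable_log.comp ((measurable_const.sub
            ((measurable_snd).pow_const 2))))
    · exact Complex.measurable_exp.comp
        (measurable_fst.mul (Complex.measurable_ofReal.comp measurable_snd))
  have := hF.integral_prod_right' (ν := volume.restrict (Ioo (0:ℝ) 1))
  have heq : (fun t : ℂ => bsE η j t) = fun t => ∫ s in Ioo (0:ℝ) 1,
      ((s:ℂ))^j * Complex.exp ((Real.log (1-s^2) : ℂ) * (η+1/2))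
        * Complex.exp (t*(s:ℂ)) := funext hrw
  rw [heq]
  exact this.measurable

lemma besselStruve_measurable {η : ℂ} (hη : -1 < η.re) :
    Measurable (fun t : ℂ => besselStruve η t) := by
  have heq : (fun t : ℂ => besselStruve η t) = fun t =>
      Complex.Gamma (η+1) / ((Real.sqrt Real.pi : ℂ) * Complex.Gamma (η+3/2)) *
        (2*(η+1) * bsE η 0 t + t * bsE η 1 t) := funext (besselStruve_rep hη)
  rw [heq]
  apply Measurable.const_mul
  exact (((bsE_measurable η 0).const_mul _).add
    (measurable_id.mul (bsE_measurable η 1)))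

lemma bs_ue_le_one {u : ℝ} (hu : 0 ≤ u) : u * Real.exp (-u) ≤ 1 := by
  have h1 : u ≤ Real.exp u := by linarith [Real.add_one_le_exp u]
  have h2 := mul_le_mul_of_nonneg_right h1 (Real.exp_pos (-u)).le
  rwa [← Real.exp_add, add_neg_cancel, Real.exp_zero] at h2

lemma bs_bound {η w : ℂ} (hη : -1 < η.re) (hw : 0 < w.re) {y : ℝ}
    (hy : y ∈ Ioo (0:ℝ) 1) :
    ‖besselStruve η (-w/(y:ℂ))‖ ≤
      ‖Complex.Gamma (η+1) / ((Real.sqrt Real.pi : ℂ) * Complex.Gamma (η+3/2))‖ *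
        ((‖2*(η+1)‖ + ‖w‖/w.re) * ∫ s in Ioo (0:ℝ) 1, bsK η * bsg η s) := by
  obtain ⟨hy0, hy1⟩ := hy
  set t : ℂ := -w/(y:ℂ) with ht
  have htre : t.re = -w.re/y := by
    rw [ht, Complex.div_ofReal_re, Complex.neg_re]
  have hI : Integrable (fun s => bsK η * bsg η s) (volume.restrict (Ioo (0:ℝ) 1)) :=
    (bsg_int hη).const_mul _
  have hInn : (0:ℝ) ≤ ∫ s in Ioo (0:ℝ) 1, bsK η * bsg η s := by
    refine setIntegral_nonneg measurableSet_Ioo fun s hs => ?_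
    exact mul_nonneg (bsK_pos η).le (bsg_nonneg η hs)
  have hexp : ∀ s : ℝ, s ∈ Ioo (0:ℝ) 1 → Real.exp ((t*(s:ℂ)).re) ≤ 1 := by
    intro s hs
    rw [Real.exp_le_one_iff]
    have : (t*(s:ℂ)).re = t.re * s := by
      simp [Complex.mul_re]
    rw [this, htre]
    have : -w.re/y ≤ 0 := by
      apply div_nonpos_of_nonpos_of_nonneg <;> linarith
    exact mul_nonpos_of_nonpos_of_nonneg this hs.1.le
  have hE0 : ‖bsE η 0 t‖ ≤ ∫ s in Ioo (0:ℝ) 1, bsK η * bsg η s := by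
    refine norm_integral_le_of_norm_le hI ?_
    filter_upwards [ae_restrict_mem measurableSet_Ioo] with s hs
    rw [pow_zero, one_mul, norm_mul]
    calc ‖((1:ℂ)-(s:ℂ)^2)^(η+1/2)‖ * ‖Complex.exp (t*(s:ℂ))‖
        ≤ (bsK η * bsg η s) * 1 := by
          apply mul_le_mul (bs_cpow_norm_le hs) _ (norm_nonneg _)
            (mul_nonneg (bsK_pos η).le (bsg_nonneg η hs))
          rw [Complex.norm_exp]
          exact hexp s hs
      _ = bsK η * bsg η s := mul_one _
  have htE1 : ‖t * bsE η 1 t‖ ≤ (‖w‖/w.re) * ∫ s in Ioo (0:ℝ) 1, bsK η * bsg η s := by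
    have hrw : t * bsE η 1 t = ∫ s in Ioo (0:ℝ) 1,
        t * ((s:ℂ)^1 * ((1:ℂ)-(s:ℂ)^2)^(η+1/2) * Complex.exp (t*(s:ℂ))) := by
      rw [bsE, MeasureTheory.integral_const_mul]
    rw [hrw, show (‖w‖/w.re) * ∫ s in Ioo (0:ℝ) 1, bsK η * bsg η s
      = ∫ s in Ioo (0:ℝ) 1, (‖w‖/w.re) * (bsK η * bsg η s) from
        (MeasureTheory.integral_const_mul _ _).symm]
    refine norm_integral_le_of_norm_le (hI.const_mul _) ?_
    filter_upwards [ae_restrict_mem measurableSet_Ioo] with s hs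
    have hkey : ‖t‖ * (s * Real.exp ((t*(s:ℂ)).re)) ≤ ‖w‖/w.re := by
      have hnt : ‖t‖ = ‖w‖/y := by
        rw [ht, norm_div, norm_neg, Complex.norm_real, Real.norm_eq_abs, abs_of_pos hy0]
      have hre : (t*(s:ℂ)).re = -(w.re/y*s) := by
        simp only [Complex.mul_re, Complex.ofReal_re, Complex.ofReal_im, mul_zero, sub_zero,
          htre]
        ring
      rw [hnt, hre]
      have hu : 0 ≤ w.re/y*s := mul_nonneg (div_nonneg hw.le hy0.le) hs.1.le
      have h1 : ‖w‖/y * (s * Real.exp (-(w.re/y*s)))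
          = (‖w‖/w.re) * ((w.re/y*s) * Real.exp (-(w.re/y*s))) := by
        field_simp
      rw [h1]
      calc (‖w‖/w.re) * ((w.re/y*s) * Real.exp (-(w.re/y*s)))
          ≤ (‖w‖/w.re) * 1 :=
            mul_le_mul_of_nonneg_left (bs_ue_le_one hu)
              (div_nonneg (norm_nonneg w) hw.le)
        _ = ‖w‖/w.re := mul_one _
    calc ‖t * ((s:ℂ)^1 * ((1:ℂ)-(s:ℂ)^2)^(η+1/2) * Complex.exp (t*(s:ℂ)))‖
        = (‖t‖ * (s * Real.exp ((t*(s:ℂ)).re))) * ‖((1:ℂ)-(s:ℂ)^2)^(η+1/2)‖ := by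
          rw [norm_mul, norm_mul, norm_mul, pow_one, Complex.norm_real,
            Real.norm_eq_abs, abs_of_pos hs.1,
            Complex.norm_exp]
          ring
      _ ≤ (‖w‖/w.re) * (bsK η * bsg η s) := by
          apply mul_le_mul hkey (bs_cpow_norm_le hs) (norm_nonneg _)
          exact div_nonneg (norm_nonneg w) hw.le
  rw [besselStruve_rep hη t]
  rw [norm_mul]
  apply mul_le_mul_of_nonneg_left _ (norm_nonneg _)
  calc ‖2*(η+1) * bsE η 0 t + t * bsE η 1 t‖
      ≤ ‖2*(η+1) * bsE η 0 t‖ + ‖t * bsE η 1 t‖ := norm_add_le _ _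
    _ ≤ ‖2*(η+1)‖ * (∫ s in Ioo (0:ℝ) 1, bsK η * bsg η s)
        + (‖w‖/w.re) * ∫ s in Ioo (0:ℝ) 1, bsK η * bsg η s := by
        apply add_le_add _ htE1
        rw [norm_mul]
        exact mul_le_mul_of_nonneg_left hE0 (norm_nonneg _)
    _ = (‖2*(η+1)‖ + ‖w‖/w.re) * ∫ s in Ioo (0:ℝ) 1, bsK η * bsg η s := by ring


theorem extBeta_recurrence (ξ₁ ξ₂ p q η : ℂ)
    (h1 : 0 < ξ₁.re) (h2 : 0 < ξ₂.re) (hp : 0 < p.re) (hq : 0 < q.re) (hη : -1 < η.re) :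
    extBeta η p q ξ₁ ξ₂ = extBeta η p q (ξ₁ + 1) ξ₂ + extBeta η p q ξ₁ (ξ₂ + 1) := by
  set M1 : ℝ := ‖Complex.Gamma (η+1) / ((Real.sqrt Real.pi : ℂ) * Complex.Gamma (η+3/2))‖ *
    ((‖2*(η+1)‖ + ‖p‖/p.re) * ∫ s in Ioo (0:ℝ) 1, bsK η * bsg η s) with hM1d
  set M2 : ℝ := ‖Complex.Gamma (η+1) / ((Real.sqrt Real.pi : ℂ) * Complex.Gamma (η+3/2))‖ *
    ((‖2*(η+1)‖ + ‖q‖/q.re) * ∫ s in Ioo (0:ℝ) 1, bsK η * bsg η s) with hM2d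
  have hcast : ∀ y : ℝ, (1:ℂ) - (y:ℂ) = ((1-y:ℝ):ℂ) := by
    intro y; push_cast; ring
  have hM1 : ∀ y ∈ Ioo (0:ℝ) 1, ‖besselStruve η (-p/(y:ℂ))‖ ≤ M1 :=
    fun y hy => bs_bound hη hp hy
  have hM2 : ∀ y ∈ Ioo (0:ℝ) 1, ‖besselStruve η (-q/(1-(y:ℂ)))‖ ≤ M2 := by
    intro y hy
    rw [hcast y]
    exact bs_bound hη hq ⟨by linarith [hy.2], by linarith [hy.1]⟩
  have hM1n : 0 ≤ M1 :=
    le_trans (norm_nonneg _) (hM1 (1/2) ⟨by norm_num, by norm_num⟩)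
  have hM2n : 0 ≤ M2 :=
    le_trans (norm_nonneg _) (hM2 (1/2) ⟨by norm_num, by norm_num⟩)
  have hmS1 : Measurable (fun y : ℝ => besselStruve η (-p/(y:ℂ))) := by
    apply (besselStruve_measurable hη).comp
    exact measurable_const.mul (Complex.measurable_ofReal.inv)
  have hmS2 : Measurable (fun y : ℝ => besselStruve η (-q/(1-(y:ℂ)))) := by
    apply (besselStruve_measurable hη).comp
    exact measurable_const.mul ((measurable_const.sub Complex.measurable_ofReal).inv)
  have hInt : ∀ a b : ℂ, 0 < a.re → 0 < b.re →
      IntervalIntegrable (fun y:ℝ => (y:ℂ)^(a-1) * ((1:ℂ)-(y:ℂ))^(b-1) *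
        besselStruve η (-p/(y:ℂ)) * besselStruve η (-q/(1-(y:ℂ)))) volume 0 1 := by
    intro a b ha hb
    rw [intervalIntegrable_iff_integrableOn_Ioc_of_le zero_le_one]
    have hgint : IntegrableOn (fun y:ℝ => ‖(y:ℂ)^(a-1) * ((1:ℂ)-(y:ℂ))^(b-1)‖)
        (Ioo (0:ℝ) 1) volume :=
      ((intervalIntegrable_iff_integrableOn_Ioc_of_le zero_le_one).1
        (Complex.betaIntegral_convergent ha hb).norm).mono_set Ioo_subset_Ioc_self
    have hIoo : IntegrableOn (fun y:ℝ => (y:ℂ)^(a-1) * ((1:ℂ)-(y:ℂ))^(b-1) *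
        besselStruve η (-p/(y:ℂ)) * besselStruve η (-q/(1-(y:ℂ))))
        (Ioo (0:ℝ) 1) volume := by
      refine Integrable.mono' (hgint.const_mul (M1*M2)) ?_ ?_
      · have hc1 : ContinuousOn (fun y:ℝ => (y:ℂ)^(a-1)) (Ioo (0:ℝ) 1) := by
          intro y hy
          exact (Complex.continuousAt_ofReal_cpow_const y (a-1)
            (Or.inr hy.1.ne')).continuousWithinAt
        have hc2 : ContinuousOn (fun y:ℝ => ((1:ℂ)-(y:ℂ))^(b-1)) (Ioo (0:ℝ) 1) := by
          have heq : (fun y:ℝ => ((1:ℂ)-(y:ℂ))^(b-1))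
              = (fun x:ℝ => (x:ℂ)^(b-1)) ∘ (fun y:ℝ => 1-y) := by
            funext y
            simp only [Function.comp_apply]
            rw [hcast y]
          rw [heq]
          intro y hy
          refine ContinuousAt.continuousWithinAt ?_
          apply ContinuousAt.comp
          · exact Complex.continuousAt_ofReal_cpow_const (1-y) (b-1)
              (Or.inr (by have h2y := hy.2; intro h; linarith))
          · fun_prop
        exact (((hc1.aestronglyMeasurable measurableSet_Ioo).mul
          (hc2.aestronglyMeasurable measurableSet_Ioo)).mul
          hmS1.aestronglyMeasurable.restrict).mul
          hmS2.aestronglyMeasurable.restrict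
      · filter_upwards [ae_restrict_mem measurableSet_Ioo] with y hy
        calc ‖(y:ℂ)^(a-1) * ((1:ℂ)-(y:ℂ))^(b-1) *
              besselStruve η (-p/(y:ℂ)) * besselStruve η (-q/(1-(y:ℂ)))‖
            = ‖(y:ℂ)^(a-1) * ((1:ℂ)-(y:ℂ))^(b-1)‖ *
              ‖besselStruve η (-p/(y:ℂ))‖ * ‖besselStruve η (-q/(1-(y:ℂ)))‖ := by
              rw [norm_mul, norm_mul]
          _ ≤ ‖(y:ℂ)^(a-1) * ((1:ℂ)-(y:ℂ))^(b-1)‖ * M1 * M2 := by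
              exact mul_le_mul
                (mul_le_mul_of_nonneg_left (hM1 y hy) (norm_nonneg _))
                (hM2 y hy) (norm_nonneg _) (mul_nonneg (norm_nonneg _) hM1n)
          _ = M1*M2 * ‖(y:ℂ)^(a-1) * ((1:ℂ)-(y:ℂ))^(b-1)‖ := by ring
    exact hIoo.congr_set_ae Ioo_ae_eq_Ioc.symm
  have hIa : IntervalIntegrable (fun y:ℝ => (y:ℂ)^(ξ₁+1-1) * ((1:ℂ)-(y:ℂ))^(ξ₂-1) *
      besselStruve η (-p/(y:ℂ)) * besselStruve η (-q/(1-(y:ℂ)))) volume 0 1 :=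
    hInt (ξ₁+1) ξ₂ (by simp only [Complex.add_re, Complex.one_re]; linarith) h2
  have hIb : IntervalIntegrable (fun y:ℝ => (y:ℂ)^(ξ₁-1) * ((1:ℂ)-(y:ℂ))^(ξ₂+1-1) *
      besselStruve η (-p/(y:ℂ)) * besselStruve η (-q/(1-(y:ℂ)))) volume 0 1 :=
    hInt ξ₁ (ξ₂+1) h1 (by simp only [Complex.add_re, Complex.one_re]; linarith)
  have hpt : ∀ᵐ y : ℝ ∂volume, y ∈ Set.uIoc (0:ℝ) 1 →
      (y:ℂ)^(ξ₁-1) * ((1:ℂ)-(y:ℂ))^(ξ₂-1) *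
        besselStruve η (-p/(y:ℂ)) * besselStruve η (-q/(1-(y:ℂ)))
      = ((y:ℂ)^(ξ₁+1-1) * ((1:ℂ)-(y:ℂ))^(ξ₂-1) *
          besselStruve η (-p/(y:ℂ)) * besselStruve η (-q/(1-(y:ℂ)))
        + (y:ℂ)^(ξ₁-1) * ((1:ℂ)-(y:ℂ))^(ξ₂+1-1) *
          besselStruve η (-p/(y:ℂ)) * besselStruve η (-q/(1-(y:ℂ)))) := by
    have hne1 : ∀ᵐ y : ℝ ∂volume, y ≠ (1:ℝ) := by
      refine ae_iff.2 ?_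
      have : {y : ℝ | ¬ y ≠ (1:ℝ)} = {(1:ℝ)} := by
        ext y; simp
      rw [this]
      exact measure_singleton 1
    filter_upwards [hne1] with y hy1 hymem
    rw [uIoc_of_le zero_le_one] at hymem
    have hy0 : 0 < y := hymem.1
    have hylt : y < 1 := lt_of_le_of_ne hymem.2 hy1
    have hy0C : (y:ℂ) ≠ 0 := by
      simp [Complex.ofReal_ne_zero, hy0.ne']
    have hy1C : (1:ℂ) - (y:ℂ) ≠ 0 := by
      rw [hcast y, Complex.ofReal_ne_zero]
      intro h; linarith [sub_eq_zero.1 (by exact_mod_cast h : (1:ℝ) - y = 0)]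
    have e1 : (y:ℂ)^(ξ₁+1-1) = (y:ℂ)^(ξ₁-1) * (y:ℂ) := by
      rw [show ξ₁+1-1 = (ξ₁-1)+1 by ring, Complex.cpow_add _ _ hy0C, Complex.cpow_one]
    have e2 : ((1:ℂ)-(y:ℂ))^(ξ₂+1-1) = ((1:ℂ)-(y:ℂ))^(ξ₂-1) * ((1:ℂ)-(y:ℂ)) := by
      rw [show ξ₂+1-1 = (ξ₂-1)+1 by ring, Complex.cpow_add _ _ hy1C, Complex.cpow_one]
    rw [e1, e2]
    ring
  unfold extBeta
  rw [← intervalIntegral.integral_add hIa hIb]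
  exact intervalIntegral.integral_congr_ae hpt


end BesselStruveAux
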